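/- Let 𝓕₀ be the full system of co-bounded filters on λ, consisting of all triples (α,Z,F) such that α ∈ Z ⊆ λ∖α, |Z| < λ, sup(Z) ∉ Z, and F is the filter of co-bounded subsets of Z. Then there exists a ≤*-increasing sequence ⟨p_n : n < ω⟩ of members of Q⁰_λ(𝓕₀) which has no ≤*-upper bound in Q*_λ(𝓕₀). -/

import Mathlib

namespace RS889

noncomputable section

open Cardinal Set

universe u v

/-- `F` is a (proper) filter on the set `Z`, presented as the family of its members. -/
def IsFilterOn {α : Type u} (F : Set (Set α)) (Z : Set α) : Prop :=
  (∀ A ∈ F, A ⊆ Z) ∧ Z ∈ F ∧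
    (∀ A ∈ F, ∀ B, A ⊆ B → B ⊆ Z → B ∈ F) ∧
    (∀ A ∈ F, ∀ B ∈ F, A ∩ B ∈ F) ∧ ∅ ∉ F

/-- The family `F⁺` of `F`-positive subsets of `Z`. -/
def posOf {α : Type u} (F : Set (Set α)) (Z : Set α) : Set (Set α) :=
  {B | B ⊆ Z ∧ ∀ C ∈ F, (B ∩ C).Nonempty}

/-- `F` is an ultrafilter on the set `Z`. -/
def IsUltraOn {α : Type u} (F : Set (Set α)) (Z : Set α) : Prop :=
  IsFilterOn F Z ∧ ∀ A ⊆ Z, A ∈ F ∨ Z \ A ∈ F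

/-- An unultra filter: every positive set splits into two positive pieces. -/
def Unultra {α : Type u} (F : Set (Set α)) (Z : Set α) : Prop :=
  ∀ A ∈ posOf F Z, ∃ B ⊆ A, B ∈ posOf F Z ∧ A \ B ∈ posOf F Z

/-- The sum `⊕^E_{x ∈ X} Fx x` of the filters `Fx x` on the sets `Z x` over a filter `E` on `X`. -/
def filSum {α : Type u} {β : Type v} (X : Set α) (E : Set (Set α))
    (Z : α → Set β) (Fx : α → Set (Set β)) : Set (Set β) :=
  {A | A ⊆ (⋃ x ∈ X, Z x) ∧ {x | x ∈ X ∧ Z x ∩ A ∈ Fx x} ∈ E}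

/-- The sum `⊕_{ζ<ξ} F ζ` over the filter of co-bounded subsets of `ξ`. -/
def cobddSum {α : Type u} (ξ : Ordinal.{0}) (Z : Ordinal.{0} → Set α)
    (F : Ordinal.{0} → Set (Set α)) : Set (Set α) :=
  {A | A ⊆ (⋃ ζ ∈ Set.Iio ξ, Z ζ) ∧ ∃ β < ξ, ∀ ζ, β ≤ ζ → ζ < ξ → Z ζ ∩ A ∈ F ζ}

/-- A triple `(α, Z, F)`: an ordinal, a set of ordinals and a family of subsets of `Z`
(intended to be a filter on `Z`). -/
structure LocalFilter : Type 1 where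
  a : Ordinal.{0}
  Z : Set Ordinal.{0}
  F : Set (Set Ordinal.{0})

/-- A system of local filters on `lam`. -/
def IsLFS (lam : Cardinal.{0}) (S : Set LocalFilter) : Prop :=
  (∀ t ∈ S, t.Z ⊆ Set.Iio lam.ord ∧ #t.Z < Cardinal.lift.{1} lam ∧
      IsLeast t.Z t.a ∧ IsFilterOn t.F t.Z) ∧
    ∀ β < lam.ord, ∃ t ∈ S, β ≤ t.a

/-- The family `Q*_lam(S)`. -/
def Qstar (lam : Cardinal.{0}) (S : Set LocalFilter) : Set (Set LocalFilter) :=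
  {r | r ⊆ S ∧ #r = Cardinal.lift.{1} lam ∧
    ∀ ξ : Ordinal.{0}, #{t | t ∈ r ∧ t.a = ξ} < Cardinal.lift.{1} lam}

/-- The filter `fil(r)` on `lam` generated by `r`. -/
def fil (lam : Cardinal.{0}) (r : Set LocalFilter) : Set (Set Ordinal.{0}) :=
  {A | A ⊆ Set.Iio lam.ord ∧ ∃ ε < lam.ord, ∀ t ∈ r, ε ≤ t.a → A ∩ t.Z ∈ t.F}

/-- `r` is strongly disjoint. -/
def StronglyDisjoint (r : Set LocalFilter) : Prop :=
  (∀ s ∈ r, ∀ t ∈ r, s.a = t.a → s = t) ∧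
    ∀ s ∈ r, ∀ t ∈ r, s.a < t.a → s.Z ⊆ Set.Iio t.a

/-- The family `Q⁰_lam(S)` of strongly disjoint members of `Q*_lam(S)`. -/
def Qzero (lam : Cardinal.{0}) (S : Set LocalFilter) : Set (Set LocalFilter) :=
  {r | r ∈ Qstar lam S ∧ StronglyDisjoint r}

/-- `fil(H) = ⋃ { fil(r) : r ∈ H }`. -/
def filH (lam : Cardinal.{0}) (H : Set (Set LocalFilter)) : Set (Set Ordinal.{0}) :=
  {A | ∃ r ∈ H, A ∈ fil lam r}

/-- A uniform family of subsets of `lam`: every member has cardinality `lam`. -/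
def IsUniform (lam : Cardinal.{0}) (D : Set (Set Ordinal.{0})) : Prop :=
  ∀ A ∈ D, #A = Cardinal.lift.{1} lam

/-- `C` is a club (closed unbounded) subset of `lam`. -/
def IsClub (lam : Cardinal.{0}) (C : Set Ordinal.{0}) : Prop :=
  C ⊆ Set.Iio lam.ord ∧ (∀ β < lam.ord, ∃ γ ∈ C, β < γ) ∧
    ∀ δ, δ < lam.ord → δ ≠ 0 → (∀ β < δ, ∃ γ ∈ C, β < γ ∧ γ < δ) → δ ∈ C

/-- `St` is stationary in `lam`. -/
def IsStationary (lam : Cardinal.{0}) (St : Set Ordinal.{0}) : Prop :=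
  ∀ C, IsClub lam C → (St ∩ C).Nonempty

/-- `D` is a weakly reasonable (ultra)filter on `lam`. -/
def WeaklyReasonable (lam : Cardinal.{0}) (D : Set (Set Ordinal.{0})) : Prop :=
  ∀ f : Ordinal.{0} → Ordinal.{0},
    (∀ δ < lam.ord, f δ < lam.ord) →
    (∀ δ δ', δ ≤ δ' → δ' < lam.ord → f δ ≤ f δ') →
    (∀ β < lam.ord, ∃ δ < lam.ord, β ≤ f δ) →
    ∃ C, IsClub lam C ∧ (⋃ δ ∈ C, Set.Ico δ (δ + f δ)) ∉ D

/-- `e` is the increasing enumeration of `C ∪ {0}` (in order type `lam`). -/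
def IsEnum (lam : Cardinal.{0}) (C : Set Ordinal.{0}) (e : Ordinal.{0} → Ordinal.{0}) : Prop :=
  (∀ ξ η, ξ < η → η < lam.ord → e ξ < e η) ∧
    (∀ ξ < lam.ord, e ξ ∈ insert 0 C) ∧
    ∀ γ ∈ insert 0 C, ∃ ξ < lam.ord, e ξ = γ

/-- The quotient `D/C`, where `e` is the increasing enumeration of `C ∪ {0}`. -/
def quotFil (lam : Cardinal.{0}) (D : Set (Set Ordinal.{0})) (e : Ordinal.{0} → Ordinal.{0}) :
    Set (Set Ordinal.{0}) :=
  {A | A ⊆ Set.Iio lam.ord ∧ (⋃ ξ ∈ A, Set.Ico (e ξ) (e (ξ + 1))) ∈ D}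

/-- `d` is an increasing continuous sequence of ordinals below `lam` (indexed by `ξ < lam`). -/
def IncrCont (lam : Cardinal.{0}) (d : Ordinal.{0} → Ordinal.{0}) : Prop :=
  (∀ ξ < lam.ord, d ξ < lam.ord) ∧
    (∀ ξ η, ξ < η → η < lam.ord → d ξ < d η) ∧
    ∀ δ, δ < lam.ord → Order.IsSuccLimit δ → ∀ β < d δ, ∃ ξ < δ, β ≤ d ξ

/-- The full system `𝓕^ult` of local non-principal ultrafilters on `lam`. -/
def Fult (lam : Cardinal.{0}) : Set LocalFilter :=
  {t | t.a < lam.ord ∧ t.a ∈ t.Z ∧ t.Z ⊆ {o | t.a ≤ o ∧ o < lam.ord} ∧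
      t.Z.Infinite ∧ #t.Z < Cardinal.lift.{1} lam ∧ IsUltraOn t.F t.Z ∧
      ∀ x : Ordinal.{0}, ({x} : Set Ordinal.{0}) ∉ t.F}

/-- `Σ(p)`. -/
def SigmaP (lam : Cardinal.{0}) (p : Set LocalFilter) : Set LocalFilter :=
  {t | t ∈ Fult lam ∧ ∀ A ∈ t.F, ∃ s ∈ p, A ∩ s.Z ∈ s.F}

/-- A linked family `H ⊆ Q*_lam`. -/
def Linked (lam : Cardinal.{0}) (H : Set (Set LocalFilter)) : Prop :=
  H.Nonempty ∧ ∀ S : Set (Set LocalFilter), S ⊆ H → S.Finite → S.Nonempty →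
    #{α : Ordinal.{0} | ∃ t : LocalFilter, t.a = α ∧ ∀ p ∈ S, t ∈ SigmaP lam p} =
      Cardinal.lift.{1} lam

/-- A big family `H ⊆ Q*_lam`. -/
def Big (lam : Cardinal.{0}) (H : Set (Set LocalFilter)) : Prop :=
  H.Nonempty ∧ ∀ D ⊆ Fult lam, ∃ q ∈ H, q ⊆ D ∨ q ∩ D = ∅

/-- The condition `(⊕)^sum_S`. -/
def SumCond (lam : Cardinal.{0}) (S : Set LocalFilter) : Prop :=
  ∀ κ : Cardinal.{0}, ℵ₀ ≤ κ → κ < lam →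
    ∀ t : Ordinal.{0} → LocalFilter,
      (∀ ξ < κ.ord, t ξ ∈ S) →
      (∀ ξ ζ, ξ < ζ → ζ < κ.ord → (t ξ).Z ⊆ Set.Iio (t ζ).a) →
      ∃ E : Set (Set Ordinal.{0}), IsFilterOn E (Set.Iio κ.ord) ∧
        (∀ A ∈ E, #A = Cardinal.lift.{1} κ) ∧
        (LocalFilter.mk (t 0).a (⋃ ξ ∈ Set.Iio κ.ord, (t ξ).Z)
          (filSum (Set.Iio κ.ord) E (fun ξ => (t ξ).Z) (fun ξ => (t ξ).F))) ∈ S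

/-- `(<lam⁺)`-completeness of a subfamily `Q` of `Q*` with respect to `≤*`. -/
def Complete (lam : Cardinal.{0}) (Q : Set (Set LocalFilter)) : Prop :=
  ∀ γ : Ordinal.{0}, γ.card ≤ lam →
    ∀ p : Ordinal.{0} → Set LocalFilter,
      (∀ ξ < γ, p ξ ∈ Q) →
      (∀ ξ ζ, ξ ≤ ζ → ζ < γ → fil lam (p ξ) ⊆ fil lam (p ζ)) →
      ∃ q ∈ Q, ∀ ξ < γ, fil lam (p ξ) ⊆ fil lam q

/-- The full system `𝓕₀` of co-bounded filters on `lam`. -/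
def Fcobdd (lam : Cardinal.{0}) : Set LocalFilter :=
  {t | t.a ∈ t.Z ∧ t.Z ⊆ {o | t.a ≤ o ∧ o < lam.ord} ∧
      Cardinal.mk t.Z < Cardinal.lift.{1} lam ∧ sSup t.Z ∉ t.Z ∧
      t.F = {A | A ⊆ t.Z ∧ ∃ β < sSup t.Z, ∀ x ∈ t.Z, β ≤ x → x ∈ A}}

/-- The `Ē`-closure of a system `S` of local filters (as an inductive family:
it is closed under `E κ`-sums of `κ`-sequences of previously obtained triples). -/
inductive EClos (lam : Cardinal.{0}) (E : Cardinal.{0} → Set (Set Ordinal.{0}))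
    (S : Set LocalFilter) : LocalFilter → Prop
  | base : ∀ t ∈ S, EClos lam E S t
  | sum : ∀ κ : Cardinal.{0}, ℵ₀ ≤ κ → κ < lam →
      ∀ t : Ordinal.{0} → LocalFilter,
        (∀ ξ < κ.ord, EClos lam E S (t ξ)) →
        (∀ ξ ζ, ξ < ζ → ζ < κ.ord → (t ξ).Z ⊆ Set.Iio (t ζ).a) →
        EClos lam E S (LocalFilter.mk (t 0).a (⋃ ξ ∈ Set.Iio κ.ord, (t ξ).Z)
          (filSum (Set.Iio κ.ord) (E κ) (fun ξ => (t ξ).Z) (fun ξ => (t ξ).F)))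

/-- The full system `𝓕^unu` of local unultra filters on `lam`. -/
def Funu (lam : Cardinal.{0}) : Set LocalFilter :=
  {t | t.Z.Nonempty ∧ t.Z ⊆ Set.Iio lam.ord ∧ #t.Z < Cardinal.lift.{1} lam ∧
      IsLeast t.Z t.a ∧ IsFilterOn t.F t.Z ∧ Unultra t.F t.Z}

/-- A pararegularity system for `F` (on `Z`), indexed by finite subsets of `κ`. -/
def PRSystem (κ : Cardinal.{0}) (F : Set (Set Ordinal.{0})) (Z : Set Ordinal.{0}) : Prop :=
  ∃ A : Finset Ordinal.{0} → Set Ordinal.{0},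
    (∀ u : Finset Ordinal.{0}, ↑u ⊆ Set.Iio κ.ord → A u ∈ F) ∧
    (∀ u v : Finset Ordinal.{0}, ↑v ⊆ Set.Iio κ.ord → u ⊆ v → A v ⊆ A u) ∧
    (∀ U : Set Ordinal.{0}, U ⊆ Set.Iio κ.ord → U.Infinite →
      (⋂ ξ ∈ U, A {ξ}) = ∅) ∧
    F = {B | B ⊆ Z ∧ ∃ u : Finset Ordinal.{0}, ↑u ⊆ Set.Iio κ.ord ∧ A u ⊆ B}

/-- `F` is a pararegular filter on `Z` (with `α = min Z`). -/
def Pararegular (lam : Cardinal.{0}) (F : Set (Set Ordinal.{0})) (Z : Set Ordinal.{0})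
    (α : Ordinal.{0}) : Prop :=
  ∃ κ : Cardinal.{0}, (Ordinal.omega0 + α).card ≤ κ ∧ κ < lam ∧ PRSystem κ F Z

/-- `F` is a strongly pararegular filter on `Z` (with `α = min Z`). -/
def StronglyPararegular (lam : Cardinal.{0}) (F : Set (Set Ordinal.{0})) (Z : Set Ordinal.{0})
    (α : Ordinal.{0}) : Prop :=
  ∃ κ : Cardinal.{0}, 2 ^ (Ordinal.omega0 + α).card ≤ κ ∧ κ < lam ∧ PRSystem κ F Z

/-- The full system `𝓕^pr` of local pararegular filters on `lam`. -/
def Fpr (lam : Cardinal.{0}) : Set LocalFilter :=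
  {t | t.Z.Infinite ∧ t.Z ⊆ Set.Iio lam.ord ∧ #t.Z < Cardinal.lift.{1} lam ∧
      IsLeast t.Z t.a ∧ IsFilterOn t.F t.Z ∧ Pararegular lam t.F t.Z t.a}

/-- The full system `𝓕^spr` of local strongly pararegular filters on `lam`. -/
def Fspr (lam : Cardinal.{0}) : Set LocalFilter :=
  {t | t.Z.Infinite ∧ t.Z ⊆ Set.Iio lam.ord ∧ #t.Z < Cardinal.lift.{1} lam ∧
      IsLeast t.Z t.a ∧ IsFilterOn t.F t.Z ∧ StronglyPararegular lam t.F t.Z t.a}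

/-- The space `^lam lam`. -/
def Fn (lam : Cardinal.{0}) : Type 1 := ↥(Set.Iio lam.ord) → ↥(Set.Iio lam.ord)

/-- The basic open set `O_s` determined by a partial function `s` of length `γ`. -/
def basicOpen (lam : Cardinal.{0}) (γ : Ordinal.{0}) (s : Ordinal.{0} → Ordinal.{0}) : Set (Fn lam) :=
  {f | ∀ ξ : ↥(Set.Iio lam.ord), (ξ : Ordinal.{0}) < γ → ((f ξ : Ordinal.{0}) = s ξ)}

/-- `X ⊆ ^lam lam` is nowhere dense. -/
def NwDense (lam : Cardinal.{0}) (X : Set (Fn lam)) : Prop :=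
  ∀ γ < lam.ord, ∀ s : Ordinal.{0} → Ordinal.{0}, (∀ ξ < γ, s ξ < lam.ord) →
    ∃ γ', γ ≤ γ' ∧ γ' < lam.ord ∧ ∃ s' : Ordinal.{0} → Ordinal.{0},
      (∀ ξ < γ', s' ξ < lam.ord) ∧ (∀ ξ < γ, s' ξ = s ξ) ∧
      basicOpen lam γ' s' ∩ X = ∅

/-- `X` belongs to the ideal `M^lam_{lam,lam}`: it is covered by `lam` many
nowhere dense sets. -/
def MeagerSet (lam : Cardinal.{0}) (X : Set (Fn lam)) : Prop :=
  ∃ A : Ordinal.{0} → Set (Fn lam), (∀ ξ < lam.ord, NwDense lam (A ξ)) ∧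
    X ⊆ ⋃ ξ ∈ Set.Iio lam.ord, A ξ

/-- `cov(M^lam_{lam,lam})`. -/
def covM (lam : Cardinal.{0}) : Cardinal.{1} :=
  sInf {c | ∃ 𝓐 : Set (Set (Fn lam)), (∀ X ∈ 𝓐, MeagerSet lam X) ∧
    ⋃₀ 𝓐 = Set.univ ∧ #𝓐 = c}

/-- Nodes of trees of sequences of ordinals: a pair (level, function). -/
abbrev TNode : Type 1 := Ordinal.{0} × (Ordinal.{0} → Ordinal.{0})

/-- Truncation of a function below `γ` (with value `0` elsewhere). -/
def truncF (γ : Ordinal.{0}) (f : Ordinal.{0} → Ordinal.{0}) : Ordinal.{0} → Ordinal.{0} :=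
  fun ξ => if ξ < γ then f ξ else 0

/-- `T` is a tree of height `lam` of (normalized) sequences of ordinals `< lam`. -/
def IsTree (lam : Cardinal.{0}) (T : Set TNode) : Prop :=
  (∀ x ∈ T, x.1 < lam.ord ∧ (∀ ξ < x.1, x.2 ξ < lam.ord) ∧ x.2 = truncF x.1 x.2) ∧
    ∀ x ∈ T, ∀ γ ≤ x.1, (γ, truncF γ x.2) ∈ T

/-- The `γ`-th level of `T`. -/
def treeLevel (T : Set TNode) (γ : Ordinal.{0}) : Set TNode := {x | x ∈ T ∧ x.1 = γ}

/-- `T` is a `lam`-Kurepa tree: a tree of height `lam` all of whose levels are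
nonempty of cardinality `< lam`. -/
def IsKurepaTree (lam : Cardinal.{0}) (T : Set TNode) : Prop :=
  IsTree lam T ∧
    ∀ γ < lam.ord, (treeLevel T γ).Nonempty ∧
      #(treeLevel T γ) < Cardinal.lift.{1} lam

/-- The set of `lam`-branches of `T` (normalized functions all of whose proper
initial segments lie in `T`). -/
def branches (lam : Cardinal.{0}) (T : Set TNode) : Set (Ordinal.{0} → Ordinal.{0}) :=
  {f | f = truncF lam.ord f ∧ ∀ γ < lam.ord, (γ, truncF γ f) ∈ T}



/-! ### Auxiliary material for `stmt4` -/

instance : Inhabited LocalFilter := ⟨⟨0, ∅, ∅⟩⟩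

/-- The `β`-th block `[ω·β, ω·β+ω)`. -/
def blkZ (β : Ordinal.{0}) : Set Ordinal.{0} :=
  Set.Ico (Ordinal.omega0 * β) (Ordinal.omega0 * β + Ordinal.omega0)

/-- The co-bounded filter on the `β`-th block. -/
def blkF (β : Ordinal.{0}) : Set (Set Ordinal.{0}) :=
  {A | A ⊆ blkZ β ∧ ∃ b < Ordinal.omega0 * β + Ordinal.omega0, ∀ x ∈ blkZ β, b ≤ x → x ∈ A}

/-- The local filter triple of the `β`-th block. -/
def blkT (β : Ordinal.{0}) : LocalFilter := ⟨Ordinal.omega0 * β, blkZ β, blkF β⟩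

/-- The `n`-th member of the `≤*`-increasing sequence. -/
def pSeq (lam : Cardinal.{0}) (n : ℕ) : Set LocalFilter :=
  {t | ∃ β, β < lam.ord ∧ (n : Ordinal) ≤ β % Ordinal.omega0 ∧ t = blkT β}

/-- The set of points whose block has index of "column" at least `n`. -/
def ASet (lam : Cardinal.{0}) (n : ℕ) : Set Ordinal.{0} :=
  {x | x < lam.ord ∧ (n : Ordinal) ≤ (x / Ordinal.omega0) % Ordinal.omega0}

/-- The union of tails of blocks prescribed by `h`. -/
def HSet (lam : Cardinal.{0}) (h : Ordinal.{0} → Ordinal.{0}) : Set Ordinal.{0} :=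
  {x | x < lam.ord ∧ h (x / Ordinal.omega0) ≤ x % Ordinal.omega0}

section Blocks

open Ordinal

theorem mem_blkZ_iff {x β : Ordinal.{0}} : x ∈ blkZ β ↔ x / omega0 = β := by
  constructor
  · rintro ⟨h1, h2⟩
    refine le_antisymm ?_ ((le_div omega0_ne_zero).2 h1)
    have : x / omega0 < β + 1 := by
      rw [div_lt omega0_ne_zero, add_one_eq_succ, mul_succ]
      exact h2
    rwa [add_one_eq_succ, Order.lt_succ_iff] at this
  · rintro rfl
    refine ⟨mul_div_le x omega0, ?_⟩
    conv_lhs => rw [← div_add_mod x omega0]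
    exact (add_lt_add_iff_left _).2 (mod_lt x omega0_ne_zero)

theorem blkZ_sSup (β : Ordinal.{0}) : sSup (blkZ β) = omega0 * β + omega0 := by
  have hlim : Order.IsSuccLimit (omega0 * β + omega0) := isSuccLimit_add _ isSuccLimit_omega0
  have hmem : omega0 * β ∈ blkZ β :=
    ⟨le_rfl, by simpa using (add_lt_add_iff_left (omega0 * β)).2 omega0_pos⟩
  refine IsLUB.csSup_eq ⟨fun x hx => hx.2.le, fun u hu => ?_⟩ ⟨_, hmem⟩
  by_contra hlt
  push_neg at hlt
  have hu1 : u + 1 ∈ blkZ β := ⟨(hu hmem).trans le_self_add, hlim.succ_lt hlt⟩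
  exact absurd (hu hu1) (by simp)

theorem blkZ_card (β : Ordinal.{0}) : #(blkZ β) ≤ ℵ₀ := by
  have hinj : Function.Injective (fun x : blkZ β => (⟨x.1 % omega0, mod_lt _ omega0_ne_zero⟩ :
      Set.Iio (omega0 : Ordinal.{0}))) := by
    rintro ⟨x, hx⟩ ⟨y, hy⟩ h
    simp only [Subtype.mk.injEq] at h ⊢
    have hx' : omega0 * β + x % omega0 = x := by
      conv_rhs => rw [← div_add_mod x omega0, mem_blkZ_iff.1 hx]
    have hy' : omega0 * β + y % omega0 = y := by
      conv_rhs => rw [← div_add_mod y omega0, mem_blkZ_iff.1 hy]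
    rw [← hx', ← hy', Subtype.mk.inj h]
  calc #(blkZ β) ≤ #(Set.Iio (omega0 : Ordinal.{0})) := Cardinal.mk_le_of_injective hinj
    _ = Cardinal.lift.{1} (card omega0) := Ordinal.mk_Iio_ordinal _
    _ = ℵ₀ := by rw [card_omega0, Cardinal.lift_aleph0]

theorem blk_lt_ord {lam : Cardinal.{0}} (hunc : ℵ₀ < lam) {β : Ordinal.{0}}
    (hβ : β < lam.ord) : omega0 * β + omega0 < lam.ord := by
  rw [Cardinal.lt_ord] at hβ ⊢
  rw [Ordinal.card_add, Ordinal.card_mul, card_omega0]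
  exact Cardinal.add_lt_of_lt hunc.le
    (Cardinal.mul_lt_of_lt hunc.le hunc hβ) hunc

theorem blkT_mem_Fcobdd {lam : Cardinal.{0}} (hunc : ℵ₀ < lam) {β : Ordinal.{0}}
    (hβ : β < lam.ord) : blkT β ∈ Fcobdd lam := by
  have hsub : blkZ β ⊆ {o | omega0 * β ≤ o ∧ o < lam.ord} := fun x hx =>
    ⟨hx.1, hx.2.trans (blk_lt_ord hunc hβ)⟩
  have hmem : omega0 * β ∈ blkZ β :=
    ⟨le_rfl, by simpa using (add_lt_add_iff_left (omega0 * β)).2 omega0_pos⟩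
  refine ⟨hmem, hsub, ?_, ?_, ?_⟩
  · exact lt_of_le_of_lt (blkZ_card β)
      (by rw [← Cardinal.lift_aleph0.{1,0}]; exact Cardinal.lift_lt.2 hunc)
  · show sSup (blkZ β) ∉ blkZ β
    rw [blkZ_sSup]
    rintro ⟨-, h2⟩
    exact absurd h2 (lt_irrefl _)
  · show blkF β = _
    rw [show sSup (blkT β).Z = omega0 * β + omega0 from blkZ_sSup β]
    rfl

end Blocks


section PSeq

open Ordinal

theorem blkT_a (β : Ordinal.{0}) : (blkT β).a = omega0 * β := rfl

theorem blkT_inj : Function.Injective blkT := by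
  intro β₁ β₂ h
  have : (blkT β₁).a = (blkT β₂).a := by rw [h]
  rw [blkT_a, blkT_a] at this
  have h1 := mul_div_cancel β₁ omega0_ne_zero
  rw [this, mul_div_cancel β₂ omega0_ne_zero] at h1
  exact h1.symm

theorem natCast_lt_ord {lam : Cardinal.{0}} (hunc : ℵ₀ < lam) (n : ℕ) :
    ((n : Ordinal.{0})) < lam.ord := by
  rw [Cardinal.lt_ord]
  exact lt_trans (by simp [Cardinal.nat_lt_aleph0]) hunc

theorem pSeq_lt_ord {lam : Cardinal.{0}} (hunc : ℵ₀ < lam) {ξ : Ordinal.{0}}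
    (hξ : ξ < lam.ord) (n : ℕ) : omega0 * ξ + n < lam.ord := by
  rw [Cardinal.lt_ord] at hξ ⊢
  rw [Ordinal.card_add, Ordinal.card_mul, card_omega0]
  refine Cardinal.add_lt_of_lt hunc.le (Cardinal.mul_lt_of_lt hunc.le hunc hξ) ?_
  have hcn : ((n : Ordinal.{0})).card = (n : Cardinal.{0}) := by simp
  rw [hcn]
  exact lt_trans (Cardinal.nat_lt_aleph0 n) hunc

theorem pSeq_card {lam : Cardinal.{0}} (hreg : lam.IsRegular) (hunc : ℵ₀ < lam) (n : ℕ) :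
    #(pSeq lam n) = Cardinal.lift.{1} lam := by
  refine le_antisymm ?_ ?_
  · have hsub : pSeq lam n ⊆ blkT '' (Set.Iio lam.ord) := by
      rintro t ⟨β, hβ, -, rfl⟩
      exact ⟨β, hβ, rfl⟩
    calc #(pSeq lam n) ≤ #(blkT '' (Set.Iio lam.ord)) := Cardinal.mk_le_mk_of_subset hsub
      _ ≤ #(Set.Iio lam.ord) := Cardinal.mk_image_le
      _ = Cardinal.lift.{1} lam := by rw [Ordinal.mk_Iio_ordinal, Cardinal.card_ord]
  · have hf : ∀ ξ : Set.Iio lam.ord, blkT (omega0 * ξ.1 + n) ∈ pSeq lam n := by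
      rintro ⟨ξ, hξ⟩
      refine ⟨omega0 * ξ + n, pSeq_lt_ord hunc hξ n, ?_, rfl⟩
      rw [mul_add_mod_self, mod_eq_of_lt (nat_lt_omega0 n)]
    have hinj : Function.Injective (fun ξ : Set.Iio lam.ord =>
        (⟨blkT (omega0 * ξ.1 + n), hf ξ⟩ : pSeq lam n)) := by
      rintro ⟨ξ₁, h₁⟩ ⟨ξ₂, h₂⟩ h
      simp only [Subtype.mk.injEq] at h ⊢
      have h' := blkT_inj h
      have e1 := mul_add_div ξ₁ omega0_ne_zero (n : Ordinal)
      rw [h', mul_add_div ξ₂ omega0_ne_zero,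
        div_eq_zero_of_lt (nat_lt_omega0 n), add_zero, add_zero] at e1
      exact e1.symm
    calc Cardinal.lift.{1} lam = #(Set.Iio lam.ord) := by
          rw [Ordinal.mk_Iio_ordinal, Cardinal.card_ord]
      _ ≤ #(pSeq lam n) := Cardinal.mk_le_of_injective hinj

theorem pSeq_mem_Qzero {lam : Cardinal.{0}} (hreg : lam.IsRegular) (hunc : ℵ₀ < lam) (n : ℕ) :
    pSeq lam n ∈ Qzero lam (Fcobdd lam) := by
  have hfib : ∀ ξ : Ordinal.{0}, ({t | t ∈ pSeq lam n ∧ t.a = ξ} : Set LocalFilter).Subsingleton := by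
    rintro ξ t₁ ⟨⟨β₁, -, -, rfl⟩, ha₁⟩ t₂ ⟨⟨β₂, -, -, rfl⟩, ha₂⟩
    rw [blkT_a] at ha₁ ha₂
    have : β₁ = β₂ := by
      have h1 := mul_div_cancel β₁ omega0_ne_zero
      rw [ha₁, ← ha₂, mul_div_cancel β₂ omega0_ne_zero] at h1
      exact h1.symm
    rw [this]
  refine ⟨⟨?_, pSeq_card hreg hunc n, ?_⟩, ?_, ?_⟩
  · rintro t ⟨β, hβ, -, rfl⟩
    exact blkT_mem_Fcobdd hunc hβ
  · intro ξ
    refine lt_of_le_of_lt (Cardinal.mk_le_one_iff_set_subsingleton.2 (hfib ξ)) ?_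
    calc (1 : Cardinal.{1}) < ℵ₀ := Cardinal.one_lt_aleph0
      _ = Cardinal.lift.{1} ℵ₀ := Cardinal.lift_aleph0.symm
      _ ≤ Cardinal.lift.{1} lam := Cardinal.lift_le.2 hreg.1
  · intro s hs t ht hst
    exact hfib s.a ⟨hs, rfl⟩ ⟨ht, hst.symm⟩
  · rintro s ⟨β₁, -, -, rfl⟩ t ⟨β₂, -, -, rfl⟩ hlt
    rw [blkT_a, blkT_a] at hlt
    have hβ : β₁ < β₂ := lt_of_not_ge fun h => absurd hlt (not_lt.2 (mul_le_mul_right h _))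
    intro x hx
    have : x < omega0 * β₁ + omega0 := hx.2
    calc x < omega0 * β₁ + omega0 := hx.2
      _ = omega0 * (β₁ + 1) := by rw [mul_add, mul_one]
      _ ≤ omega0 * β₂ := mul_le_mul_right ((add_one_eq_succ β₁) ▸ Order.succ_le_of_lt hβ) _
      _ = (blkT β₂).a := rfl

theorem fil_anti {lam : Cardinal.{0}} {r r' : Set LocalFilter} (h : r' ⊆ r) :
    fil lam r ⊆ fil lam r' := by
  rintro A ⟨hsub, ε, hε, hp⟩
  exact ⟨hsub, ε, hε, fun t ht hat => hp t (h ht) hat⟩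

theorem pSeq_anti {lam : Cardinal.{0}} (n : ℕ) : pSeq lam (n + 1) ⊆ pSeq lam n := by
  rintro t ⟨β, hβ, hn, rfl⟩
  refine ⟨β, hβ, le_trans ?_ hn, rfl⟩
  exact_mod_cast Nat.cast_le.2 (Nat.le_succ n)

theorem ord_pos {lam : Cardinal.{0}} (hunc : ℵ₀ < lam) : (0 : Ordinal.{0}) < lam.ord := by
  rw [Cardinal.lt_ord]
  simpa using lt_trans Cardinal.aleph0_pos hunc

theorem ASet_mem_fil {lam : Cardinal.{0}} (hunc : ℵ₀ < lam) (n : ℕ) :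
    ASet lam n ∈ fil lam (pSeq lam n) := by
  refine ⟨fun x hx => hx.1, 0, ord_pos hunc, ?_⟩
  rintro t ⟨β, hβ, hn, rfl⟩ -
  show ASet lam n ∩ blkZ β ∈ blkF β
  refine ⟨Set.inter_subset_right, 0,
    lt_of_lt_of_le omega0_pos le_add_self, fun x hx _ => ?_⟩
  refine ⟨⟨hx.2.trans (blk_lt_ord hunc hβ), ?_⟩, hx⟩
  rw [mem_blkZ_iff.1 hx]
  exact hn

theorem HSet_mem_fil {lam : Cardinal.{0}} (hunc : ℵ₀ < lam) (h : Ordinal.{0} → Ordinal.{0})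
    (hh : ∀ β, h β < omega0) : HSet lam h ∈ fil lam (pSeq lam 0) := by
  refine ⟨fun x hx => hx.1, 0, ord_pos hunc, ?_⟩
  rintro t ⟨β, hβ, -, rfl⟩ -
  show HSet lam h ∩ blkZ β ∈ blkF β
  refine ⟨Set.inter_subset_right, omega0 * β + h β, (add_lt_add_iff_left _).2 (hh β), fun x hx hge => ?_⟩
  have hdiv : x / omega0 = β := mem_blkZ_iff.1 hx
  refine ⟨⟨hx.2.trans (blk_lt_ord hunc hβ), ?_⟩, hx⟩
  rw [hdiv]
  have hx' : omega0 * β + x % omega0 = x := by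
    conv_rhs => rw [← div_add_mod x omega0, hdiv]
  rw [← hx'] at hge
  exact (add_le_add_iff_left (omega0 * β)).1 hge

end PSeq


section Bounds

open Ordinal

/-- A set of fewer than `lam` ordinals below `lam.ord` has supremum below `lam.ord`. -/
theorem sSup_lt_ord_of_small {lam : Cardinal.{0}} (hreg : lam.IsRegular)
    {S : Set Ordinal.{0}} (hsub : ∀ x ∈ S, x < lam.ord)
    (hcard : #S < Cardinal.lift.{1} lam) : sSup S < lam.ord := by
  rcases Set.eq_empty_or_nonempty S with rfl | hne
  · rw [csSup_empty]
    show (0 : Ordinal.{0}) < lam.ord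
    rw [Cardinal.lt_ord]
    simpa using lt_of_lt_of_le Cardinal.aleph0_pos hreg.1
  · obtain ⟨c₀, hc₀lt, hc₀⟩ := Cardinal.lt_lift_iff.1 hcard
    have ⟨e⟩ : Nonempty (Quotient.out c₀ ≃ S) := by
      rw [← Cardinal.lift_mk_eq'.{0,1}]
      rw [Cardinal.mk_out, Cardinal.lift_id']
      exact hc₀
    set f : Quotient.out c₀ → Ordinal.{0} := fun i => ((e i : S) : Ordinal.{0}) with hf
    have hrange : S = Set.range f := by
      ext y
      constructor
      · intro hy
        exact ⟨e.symm ⟨y, hy⟩, by simp [hf]⟩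
      · rintro ⟨i, rfl⟩
        exact (e i).2
    have : iSup f < lam.ord := by
      refine Ordinal.iSup_lt_ord ?_ fun i => hsub _ (e i).2
      rw [Cardinal.mk_out, hreg.cof_eq]
      exact hc₀lt
    rw [hrange]
    exact this

theorem isRegular_lift {lam : Cardinal.{0}} (hreg : lam.IsRegular) :
    (Cardinal.lift.{1} lam).IsRegular := by
  constructor
  · rw [← Cardinal.lift_aleph0.{1,0}]
    exact Cardinal.lift_le.2 hreg.1
  · calc Cardinal.lift.{1} lam ≤ Cardinal.lift.{1} lam.ord.cof := Cardinal.lift_le.2 hreg.2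
      _ = (Ordinal.lift.{1} lam.ord).cof := Ordinal.lift_cof _
      _ = (Cardinal.lift.{1} lam).ord.cof := by rw [Cardinal.lift_ord]

/-- In any `q ∈ Q*` the first coordinates are unbounded in `lam`. -/
theorem Qstar_unbounded {lam : Cardinal.{0}} (hreg : lam.IsRegular)
    {q : Set LocalFilter} (hq : q ∈ Qstar lam (Fcobdd lam)) :
    ∀ ε < lam.ord, ∃ t ∈ q, ε ≤ t.a := by
  intro ε hε
  by_contra hcon
  push_neg at hcon
  have hsub : q ⊆ ⋃ ξ : Set.Iio ε, {t | t ∈ q ∧ t.a = ξ.1} := by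
    intro t ht
    exact Set.mem_iUnion.2 ⟨⟨t.a, hcon t ht⟩, ht, rfl⟩
  have hlt : #q < Cardinal.lift.{1} lam := by
    calc #q ≤ #(⋃ ξ : Set.Iio ε, {t | t ∈ q ∧ t.a = ξ.1}) := Cardinal.mk_le_mk_of_subset hsub
      _ ≤ Cardinal.sum (fun ξ : Set.Iio ε => #{t | t ∈ q ∧ t.a = ξ.1}) :=
        Cardinal.mk_iUnion_le_sum_mk
      _ < Cardinal.lift.{1} lam := by
        refine Cardinal.sum_lt_of_isRegular (isRegular_lift hreg) ?_ fun ξ => hq.2.2 ξ.1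
        rw [Ordinal.mk_Iio_ordinal]
        exact Cardinal.lift_lt.2 (Cardinal.lt_ord.1 hε)
  rw [hq.2.1] at hlt
  exact absurd hlt (lt_irrefl _)

end Bounds


section Key

open Ordinal
open scoped Classical

/-- If co-boundedly many points of `Z` lie in every `ASet`, then `sSup Z` is closed
under adding `ω`. -/
theorem sup_add_omega_lt {Z : Set Ordinal.{0}} (hne : Z.Nonempty) (hbdd : BddAbove Z)
    (hsup : sSup Z ∉ Z)
    (hA : ∀ n : ℕ, ∃ β < sSup Z, ∀ x ∈ Z, β ≤ x → (n : Ordinal) ≤ (x / omega0) % omega0) :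
    ∀ β < sSup Z, β + omega0 < sSup Z := by
  intro β hβ
  by_contra hcon
  push_neg at hcon
  have hu : β + omega0 = omega0 * (β / omega0 + 1) := by
    calc β + omega0 = omega0 * (β / omega0) + β % omega0 + omega0 := by rw [div_add_mod]
      _ = omega0 * (β / omega0) + (β % omega0 + omega0) := by rw [add_assoc]
      _ = omega0 * (β / omega0) + omega0 := by rw [add_omega0 (mod_lt β omega0_ne_zero)]
      _ = omega0 * (β / omega0 + 1) := by rw [mul_add, mul_one]
  obtain ⟨n₁, hn₁⟩ := lt_omega0.1 (mod_lt (β / omega0) omega0_ne_zero)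
  obtain ⟨β₀, hβ₀, htail⟩ := hA (n₁ + 1)
  obtain ⟨x, hxZ, hxgt⟩ := exists_lt_of_lt_csSup hne (max_lt hβ hβ₀)
  have hxlt : x < sSup Z :=
    lt_of_le_of_ne (le_csSup hbdd hxZ) (fun h => hsup (h ▸ hxZ))
  have hxu : x / omega0 = β / omega0 := by
    refine le_antisymm ?_ (div_le_left (le_of_lt (lt_of_le_of_lt (le_max_left β β₀) hxgt)) _)
    have : x / omega0 < β / omega0 + 1 := by
      rw [div_lt omega0_ne_zero, ← hu]
      exact lt_of_lt_of_le hxlt hcon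
    rwa [add_one_eq_succ, Order.lt_succ_iff] at this
  have hcast := htail x hxZ (le_of_lt (lt_of_le_of_lt (le_max_right β β₀) hxgt))
  rw [hxu, hn₁] at hcast
  exact absurd (Nat.cast_le.1 hcast) (Nat.not_succ_le_self n₁)

/-- The bound used at step `ι` of the recursion. -/
def bdAux (ι : Ordinal.{0}) (g : ∀ κ, κ < ι → LocalFilter) (e : Ordinal.{0}) : Ordinal.{0} :=
  max (max e ι) (sSup {o | ∃ κ, ∃ h : κ < ι, o = sSup (g κ h).Z + 1 + Ordinal.omega0})

/-- The transfinite recursion choosing witnesses from `q` with large, separated blocks. -/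
noncomputable def pickT (q : Set LocalFilter) (e : Ordinal.{0}) : Ordinal.{0} → LocalFilter :=
  WellFounded.fix Ordinal.lt_wf (fun ι g =>
    if h : ∃ t, t ∈ q ∧ bdAux ι g e ≤ t.a then h.choose else default)

/-- The bound used at step `ι`, in terms of `pickT` itself. -/
noncomputable def bdT (q : Set LocalFilter) (e ι : Ordinal.{0}) : Ordinal.{0} :=
  bdAux ι (fun κ _ => pickT q e κ) e

theorem pickT_eq (q : Set LocalFilter) (e ι : Ordinal.{0}) : pickT q e ι =
    if h : ∃ t, t ∈ q ∧ bdT q e ι ≤ t.a then h.choose else default := by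
  show WellFounded.fix _ _ _ = _
  rw [WellFounded.fix_eq]
  rfl

theorem Zbound {lam : Cardinal.{0}} (hreg : lam.IsRegular) (hunc : ℵ₀ < lam)
    {q : Set LocalFilter} (hq : q ∈ Qstar lam (Fcobdd lam)) {t : LocalFilter} (ht : t ∈ q) :
    sSup t.Z + 1 + omega0 < lam.ord := by
  have hF := hq.1 ht
  have hsupZ : sSup t.Z < lam.ord :=
    sSup_lt_ord_of_small hreg (fun x hx => (hF.2.1 hx).2) hF.2.2.1
  rw [Cardinal.lt_ord] at hsupZ ⊢
  rw [Ordinal.card_add, Ordinal.card_add, card_omega0]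
  have h1 : ((1 : Ordinal.{0})).card = 1 := by simp
  rw [h1]
  exact Cardinal.add_lt_of_lt hunc.le
    (Cardinal.add_lt_of_lt hunc.le hsupZ (lt_trans Cardinal.one_lt_aleph0 hunc)) hunc

theorem pickT_spec {lam : Cardinal.{0}} (hreg : lam.IsRegular) (hunc : ℵ₀ < lam)
    {q : Set LocalFilter} (hq : q ∈ Qstar lam (Fcobdd lam)) {e : Ordinal.{0}}
    (he : e < lam.ord) :
    ∀ ι < lam.ord, pickT q e ι ∈ q ∧ bdT q e ι ≤ (pickT q e ι).a := by
  intro ι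
  induction ι using Ordinal.induction with
  | _ ι IH =>
    intro hι
    have hZ : ∀ κ, κ < ι → sSup (pickT q e κ).Z + 1 + omega0 < lam.ord :=
      fun κ hκ => Zbound hreg hunc hq (IH κ hκ (hκ.trans hι)).1
    have hsetlt : sSup {o | ∃ κ, ∃ _ : κ < ι, o = sSup (pickT q e κ).Z + 1 + omega0}
        < lam.ord := by
      apply sSup_lt_ord_of_small hreg
      · rintro x ⟨κ, hκ, rfl⟩
        exact hZ κ hκ
      · have himg : {o | ∃ κ, ∃ _ : κ < ι, o = sSup (pickT q e κ).Z + 1 + omega0}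
            = (fun κ => sSup (pickT q e κ).Z + 1 + omega0) '' (Set.Iio ι) := by
          ext o
          constructor
          · rintro ⟨κ, hκ, rfl⟩
            exact ⟨κ, hκ, rfl⟩
          · rintro ⟨κ, hκ, rfl⟩
            exact ⟨κ, hκ, rfl⟩
        rw [himg]
        calc #((fun κ => sSup (pickT q e κ).Z + 1 + omega0) '' (Set.Iio ι))
            ≤ #(Set.Iio ι) := Cardinal.mk_image_le
          _ = Cardinal.lift.{1} ι.card := Ordinal.mk_Iio_ordinal ι
          _ < Cardinal.lift.{1} lam := Cardinal.lift_lt.2 (Cardinal.lt_ord.1 hι)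
    have hbd : bdT q e ι < lam.ord := by
      rw [bdT, bdAux]
      exact max_lt (max_lt he hι) hsetlt
    have hex : ∃ t, t ∈ q ∧ bdT q e ι ≤ t.a := by
      obtain ⟨t, ht, hta⟩ := Qstar_unbounded hreg hq _ hbd
      exact ⟨t, ht, hta⟩
    rw [pickT_eq, dif_pos hex]
    exact hex.choose_spec

/-- Blocks met by the `Z`-parts of distinct chosen witnesses are distinct. -/
theorem pickT_sep {lam : Cardinal.{0}} (hreg : lam.IsRegular) (hunc : ℵ₀ < lam)
    {q : Set LocalFilter} (hq : q ∈ Qstar lam (Fcobdd lam)) {e : Ordinal.{0}}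
    (he : e < lam.ord) {κ ι : Ordinal.{0}} (hκι : κ < ι) (hι : ι < lam.ord) :
    ∀ y ∈ (pickT q e κ).Z, ∀ y' ∈ (pickT q e ι).Z, y / omega0 ≠ y' / omega0 := by
  intro y hy y' hy' heq
  have hκspec := pickT_spec hreg hunc hq he κ (hκι.trans hι)
  have hιspec := pickT_spec hreg hunc hq he ι hι
  have hbddset : BddAbove {o | ∃ κ', ∃ _ : κ' < ι, o = sSup (pickT q e κ').Z + 1 + omega0} := by
    refine ⟨lam.ord, ?_⟩
    rintro o ⟨κ', hκ', rfl⟩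
    exact (Zbound hreg hunc hq (pickT_spec hreg hunc hq he κ' (hκ'.trans hι)).1).le
  have h1 : sSup (pickT q e κ).Z + 1 + omega0 ≤ bdT q e ι := by
    rw [bdT, bdAux]
    exact le_trans (le_csSup hbddset ⟨κ, hκι, rfl⟩) (le_max_right _ _)
  have hay' : (pickT q e ι).a ≤ y' := ((hq.1 hιspec.1).2.1 hy').1
  have hys : y ≤ sSup (pickT q e κ).Z := by
    refine le_csSup ⟨lam.ord, fun x hx => ?_⟩ hy
    exact (((hq.1 hκspec.1).2.1 hx).2).le
  have hm : omega0 * (y / omega0) ≤ y := mul_div_le y omega0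
  have hy'lt : y' < omega0 * (y / omega0) + omega0 := by
    rw [heq]
    conv_lhs => rw [← div_add_mod y' omega0]
    exact (add_lt_add_iff_left _).2 (mod_lt y' omega0_ne_zero)
  have hchain : omega0 * (y / omega0) + omega0 ≤ sSup (pickT q e κ).Z + 1 + omega0 := by
    rw [add_assoc, one_add_omega0]
    exact add_le_add (hm.trans hys) le_rfl
  exact absurd (hy'lt.trans_le (hchain.trans (h1.trans (hιspec.2.trans hay'))))
    (lt_irrefl y')

end Key

/-- In the full system of co-bounded filters there is a `≤*`-increasing `ω`-sequence
in `Q⁰` with no `≤*`-upper bound in `Q*`. -/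
theorem stmt4 (lam : Cardinal.{0}) (hreg : lam.IsRegular) (hunc : ℵ₀ < lam) :
    ∃ p : ℕ → Set LocalFilter,
      (∀ n, p n ∈ Qzero lam (Fcobdd lam)) ∧
      (∀ n, fil lam (p n) ⊆ fil lam (p (n + 1))) ∧
      ¬ ∃ q ∈ Qstar lam (Fcobdd lam), ∀ n, fil lam (p n) ⊆ fil lam q := by
  classical
  have hunc := hunc
  refine ⟨pSeq lam, fun n => pSeq_mem_Qzero hreg hunc n,
    fun n => fil_anti (pSeq_anti n), ?_⟩
  rintro ⟨q, hq, hb⟩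
  have hFc : ∀ t ∈ q, t ∈ Fcobdd lam := fun t ht => hq.1 ht
  -- the countably many sets `ASet lam n` belong to `fil lam q`
  have hAfil : ∀ n : ℕ, ASet lam n ∈ fil lam q := fun n => hb n (ASet_mem_fil hunc n)
  set E : ℕ → Ordinal.{0} := fun n => ((hAfil n).2).choose with hEdef
  have hE1 : ∀ n, E n < lam.ord := fun n => ((hAfil n).2).choose_spec.1
  have hE2 : ∀ n, ∀ t ∈ q, E n ≤ t.a → ASet lam n ∩ t.Z ∈ t.F :=
    fun n => ((hAfil n).2).choose_spec.2
  set ε0 : Ordinal.{0} := ⨆ n, E n with hε0def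
  have hε0lt : ε0 < lam.ord := by
    refine Ordinal.iSup_lt_ord ?_ hE1
    rw [hreg.cof_eq, Cardinal.mk_nat]
    exact hunc
  have hE0 : ∀ n, E n ≤ ε0 := fun n => le_ciSup (Ordinal.bddAbove_range _) n
  -- structural consequence for members of `q` with large first coordinate
  have hstruct : ∀ t ∈ q, ε0 ≤ t.a → ∀ n : ℕ,
      ∃ β < sSup t.Z, ∀ x ∈ t.Z, β ≤ x →
        (n : Ordinal) ≤ (x / Ordinal.omega0) % Ordinal.omega0 := by
    intro t ht hta n
    have hmem := hE2 n t ht (le_trans (hE0 n) hta)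
    rw [(hFc t ht).2.2.2.2] at hmem
    obtain ⟨-, β, hβ, htl⟩ := hmem
    exact ⟨β, hβ, fun x hx hbx => (htl x hx hbx).1.2⟩
  -- the diagonal function `hf`
  set Own : Ordinal.{0} → Set Ordinal.{0} := fun b =>
    {y | (∃ ι < lam.ord, y ∈ (pickT q ε0 ι).Z) ∧ y / Ordinal.omega0 = b} with hOwndef
  set hf : Ordinal.{0} → Ordinal.{0} := fun b =>
    if hx : (Own b).Nonempty then sInf (Own b) % Ordinal.omega0 + 1 else 1 with hhfdef
  have hfω : ∀ b, hf b < Ordinal.omega0 := by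
    intro b
    rw [hhfdef]
    dsimp only
    split
    · rw [Ordinal.add_one_eq_succ]
      exact Ordinal.isSuccLimit_omega0.succ_lt (Ordinal.mod_lt _ Ordinal.omega0_ne_zero)
    · exact Ordinal.one_lt_omega0
  have hHfil := hb 0 (HSet_mem_fil hunc hf hfω)
  obtain ⟨-, εh, hεh, htailq⟩ := hHfil
  set t0 := pickT q ε0 εh with ht0def
  have hspec := pickT_spec hreg hunc hq hε0lt εh hεh
  have ht0q : t0 ∈ q := hspec.1
  have hbdT : max ε0 εh ≤ bdT q ε0 εh := by
    rw [bdT, bdAux]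
    exact le_max_left _ _
  have ht0a1 : ε0 ≤ t0.a := le_trans (le_trans (le_max_left _ _) hbdT) hspec.2
  have ht0a2 : εh ≤ t0.a := le_trans (le_trans (le_max_right _ _) hbdT) hspec.2
  have hFmem := htailq t0 ht0q ht0a2
  rw [(hFc t0 ht0q).2.2.2.2] at hFmem
  obtain ⟨-, β, hβ, htl⟩ := hFmem
  -- basic facts about `t0.Z`
  have hZne : t0.Z.Nonempty := ⟨t0.a, (hFc t0 ht0q).1⟩
  have hZbdd : BddAbove t0.Z := ⟨lam.ord, fun x hx => ((hFc t0 ht0q).2.1 hx).2.le⟩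
  have hZsup : sSup t0.Z ∉ t0.Z := (hFc t0 ht0q).2.2.2.1
  have hω : β + Ordinal.omega0 < sSup t0.Z :=
    sup_add_omega_lt hZne hZbdd hZsup (hstruct t0 ht0q ht0a1) β hβ
  obtain ⟨x, hxZ, hxgt⟩ := exists_lt_of_lt_csSup hZne hω
  set b := x / Ordinal.omega0 with hbdef
  have hxOwn : x ∈ Own b := ⟨⟨εh, hεh, hxZ⟩, rfl⟩
  set w := sInf (Own b) with hwdef
  have hwOwn : w ∈ Own b := csInf_mem ⟨x, hxOwn⟩
  obtain ⟨⟨ι', hι', hwZ⟩, hwdiv⟩ := hwOwn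
  have hι'eq : ι' = εh := by
    rcases lt_trichotomy ι' εh with h | h | h
    · exact absurd (hwdiv.trans hbdef)
        (pickT_sep hreg hunc hq hε0lt h hεh w hwZ x hxZ)
    · exact h
    · exact absurd (hwdiv.trans hbdef).symm
        (pickT_sep hreg hunc hq hε0lt h hι' x hxZ w hwZ)
  rw [hι'eq] at hwZ
  have hm : Ordinal.omega0 * b ≤ w := by
    rw [← hwdiv]
    exact Ordinal.mul_div_le w Ordinal.omega0
  have hβw : β ≤ w := by
    refine le_trans ?_ hm
    by_contra hcon
    push_neg at hcon
    have h1 : Ordinal.omega0 * b + Ordinal.omega0 ≤ β + Ordinal.omega0 :=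
      add_le_add hcon.le le_rfl
    have h2 : x < Ordinal.omega0 * b + Ordinal.omega0 := by
      conv_lhs => rw [← Ordinal.div_add_mod x Ordinal.omega0]
      exact (add_lt_add_iff_left _).2 (Ordinal.mod_lt x Ordinal.omega0_ne_zero)
    exact absurd (h2.trans_le h1) (not_lt.2 hxgt.le)
  have hwH : w ∈ HSet lam hf := (htl w hwZ hβw).1
  have hle : hf b ≤ w % Ordinal.omega0 := by
    rw [← hwdiv]
    exact hwH.2
  rw [hhfdef] at hle
  dsimp only at hle
  rw [dif_pos ⟨x, hxOwn⟩] at hle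
  rw [← hwdef] at hle
  have hlt : w % Ordinal.omega0 < w % Ordinal.omega0 + 1 := by
    rw [Ordinal.add_one_eq_succ]
    exact Order.lt_succ _
  exact absurd (hlt.trans_le hle) (lt_irrefl _)

end

end RS889
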